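/- For f : ℓ² → ℝ, f(x) = Σ n xₙ^{2n}, with subgradient projector T, the sequence xₙ := e₁ + eₙ (standard unit vectors) satisfies xₙ ⇀ e₁ weakly, f(xₙ) = 1 + n, ‖∇f(xₙ)‖ = √(4 + 4n⁴), hence xₙ − T(xₙ) → 0 strongly while e₁ ∉ Fix T; therefore Id − T is not demiclosed at 0. -/

import Mathlib

open Filter Topology RealInnerProductSpace
open scoped Classical

lemma aux_inner_single (c : ℝ) (k : ℕ) (f : lp (fun _ : ℕ => ℝ) 2) :
    ⟪lp.single 2 k c, f⟫ = c * f k := by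
  rw [lp.inner_single_left]; simp [RCLike.inner_apply]; ring

lemma aux_norm_comb (a b : ℝ) (i j : ℕ) (h : i ≠ j) :
    ‖(a • lp.single 2 i (1:ℝ) + b • lp.single 2 j (1:ℝ) : lp (fun _ : ℕ => ℝ) 2)‖
      = Real.sqrt (a^2 + b^2) := by
  have key : ⟪(a • lp.single 2 i (1:ℝ) + b • lp.single 2 j (1:ℝ) : lp (fun _ : ℕ => ℝ) 2),
      (a • lp.single 2 i (1:ℝ) + b • lp.single 2 j (1:ℝ) : lp (fun _ : ℕ => ℝ) 2)⟫
      = a^2 + b^2 := by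
    simp only [inner_add_left, inner_add_right, real_inner_smul_left, real_inner_smul_right,
      aux_inner_single]
    simp [lp.single_apply, h, h.symm, lp.single_apply_self]
    ring
  rw [real_inner_self_eq_norm_sq] at key
  rw [← key, Real.sqrt_sq (norm_nonneg _)]

theorem stmt_19 (f : lp (fun _ : ℕ => ℝ) 2 → ℝ)
    (g : lp (fun _ : ℕ => ℝ) 2 → lp (fun _ : ℕ => ℝ) 2)
    (T : lp (fun _ : ℕ => ℝ) 2 → lp (fun _ : ℕ => ℝ) 2)
    (hf : ∀ x : lp (fun _ : ℕ => ℝ) 2,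
      f x = ∑' n : ℕ, ((n : ℝ) + 1) * (x n) ^ (2 * (n + 1)))
    (hg : ∀ (x : lp (fun _ : ℕ => ℝ) 2) (n : ℕ),
      g x n = 2 * ((n : ℝ) + 1) ^ 2 * (x n) ^ (2 * (n + 1) - 1))
    (hT : ∀ x : lp (fun _ : ℕ => ℝ) 2,
      T x = if x = 0 then x else x - (f x / ‖g x‖ ^ 2) • g x)
    (s : ℕ → lp (fun _ : ℕ => ℝ) 2)
    (hs : ∀ n : ℕ, s n = lp.single 2 0 (1 : ℝ) + lp.single 2 (n + 1) (1 : ℝ)) :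
    (∀ v : lp (fun _ : ℕ => ℝ) 2,
      Tendsto (fun n => ⟪s n, v⟫) atTop (𝓝 ⟪lp.single 2 0 (1 : ℝ), v⟫)) ∧
    (∀ n : ℕ, f (s n) = (n : ℝ) + 3) ∧
    (∀ n : ℕ, ‖g (s n)‖ = Real.sqrt (4 + 4 * ((n : ℝ) + 2) ^ 4)) ∧
    Tendsto (fun n => s n - T (s n)) atTop (𝓝 0) ∧
    T (lp.single 2 0 (1 : ℝ)) ≠ lp.single 2 0 (1 : ℝ) ∧
    ¬ (∀ (u : ℕ → lp (fun _ : ℕ => ℝ) 2) (ybar : lp (fun _ : ℕ => ℝ) 2),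
        (∀ v, Tendsto (fun n => ⟪u n, v⟫) atTop (𝓝 ⟪ybar, v⟫)) →
        Tendsto (fun n => u n - T (u n)) atTop (𝓝 0) →
        T ybar = ybar) := by
  -- coordinates of s n
  have hcoord : ∀ n k : ℕ, (s n) k = if k = 0 then 1 else if k = n + 1 then 1 else 0 := by
    intro n k
    rw [hs]
    have h2 : ((lp.single 2 0 (1:ℝ) + lp.single 2 (n+1) (1:ℝ) : lp (fun _ : ℕ => ℝ) 2)) k
        = (lp.single 2 0 (1:ℝ) : lp (fun _ : ℕ => ℝ) 2) k
          + (lp.single 2 (n+1) (1:ℝ) : lp (fun _ : ℕ => ℝ) 2) k := by simp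
    rw [h2]
    rcases eq_or_ne k 0 with rfl | hk0
    · simp [lp.single_apply_self, lp.single_apply_ne _ _ _ (by omega : (0:ℕ) ≠ n + 1)]
    rcases eq_or_ne k (n+1) with rfl | hk1
    · simp [lp.single_apply_self, lp.single_apply_ne _ _ _ hk0]
    · simp [hk0, hk1, lp.single_apply_ne _ _ _ hk0, lp.single_apply_ne _ _ _ hk1]
  -- value of f
  have hfs : ∀ n : ℕ, f (s n) = (n : ℝ) + 3 := by
    intro n
    rw [hf]
    rw [tsum_eq_sum (s := ({0, n+1} : Finset ℕ)) ?_]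
    · rw [Finset.sum_pair (by omega : (0:ℕ) ≠ n + 1)]
      rw [hcoord, hcoord]
      norm_num
      push_cast
      ring
    · intro b hb
      simp only [Finset.mem_insert, Finset.mem_singleton, not_or] at hb
      rw [hcoord]
      simp [hb.1, hb.2]
  -- g (s n) as a combination of singles
  have hgs : ∀ n : ℕ, g (s n) = (2:ℝ) • lp.single 2 0 (1:ℝ)
      + (2 * ((n:ℝ) + 2)^2) • lp.single 2 (n+1) (1:ℝ) := by
    intro n
    apply lp.ext
    funext k
    have h2 : (((2:ℝ) • lp.single 2 0 (1:ℝ)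
        + (2 * ((n:ℝ) + 2)^2) • lp.single 2 (n+1) (1:ℝ) : lp (fun _ : ℕ => ℝ) 2)) k
        = 2 * (lp.single 2 0 (1:ℝ) : lp (fun _ : ℕ => ℝ) 2) k
          + (2 * ((n:ℝ) + 2)^2) * (lp.single 2 (n+1) (1:ℝ) : lp (fun _ : ℕ => ℝ) 2) k := by
      simp only [lp.coeFn_add, lp.coeFn_smul, Pi.add_apply, Pi.smul_apply, smul_eq_mul]
    show (g (s n)) k = _
    rw [h2, hg, hcoord]
    rcases eq_or_ne k 0 with rfl | hk0
    · simp [lp.single_apply_self, lp.single_apply_ne _ _ _ (by omega : (0:ℕ) ≠ n + 1)]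
    rcases eq_or_ne k (n+1) with rfl | hk1
    · simp [lp.single_apply_self, lp.single_apply_ne _ _ _ hk0]
      push_cast
      ring
    · simp [hk0, hk1, lp.single_apply_ne _ _ _ hk0, lp.single_apply_ne _ _ _ hk1,
        zero_pow (by omega : 2 * (k+1) - 1 ≠ 0)]
  -- norm of g (s n)
  have hgn : ∀ n : ℕ, ‖g (s n)‖ = Real.sqrt (4 + 4 * ((n:ℝ) + 2)^4) := by
    intro n
    rw [hgs, aux_norm_comb _ _ _ _ (by omega : (0:ℕ) ≠ n + 1)]
    congr 1
    ring
  -- s n is nonzero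
  have hsnz : ∀ n : ℕ, s n ≠ 0 := by
    intro n h
    have := hcoord n 0
    rw [h] at this
    simp at this
  -- the difference
  have hsub : ∀ n : ℕ, s n - T (s n)
      = ((((n:ℝ) + 3)) / (4 + 4 * ((n:ℝ) + 2)^4)) • g (s n) := by
    intro n
    rw [hT, if_neg (hsnz n), sub_sub_cancel, hfs, hgn,
      Real.sq_sqrt (by positivity)]
  have hA : ∀ n : ℕ, (0:ℝ) < 4 + 4 * ((n:ℝ) + 2)^4 := by intro n; positivity
  -- norm of the difference
  have hnd : ∀ n : ℕ, ‖s n - T (s n)‖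
      = (((n:ℝ) + 3) / (4 + 4 * ((n:ℝ) + 2)^4)) * Real.sqrt (4 + 4 * ((n:ℝ) + 2)^4) := by
    intro n
    rw [hsub, norm_smul, hgn]
    congr 1
    rw [Real.norm_eq_abs, abs_of_nonneg (by positivity)]
  -- strong convergence to 0
  have hstrong : Tendsto (fun n => s n - T (s n)) atTop (𝓝 0) := by
    rw [tendsto_zero_iff_norm_tendsto_zero]
    refine squeeze_zero (fun n => norm_nonneg _) (fun n => ?_)
      tendsto_one_div_add_atTop_nhds_zero_nat
    · 
      rw [hnd]
      set A := 4 + 4 * ((n:ℝ) + 2)^4 with hAdef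
      have hApos : (0:ℝ) < A := hA n
      have hsq : Real.sqrt A ^ 2 = A := Real.sq_sqrt hApos.le
      have h1 : 2 * ((n:ℝ) + 2)^2 ≤ Real.sqrt A := by
        have := Real.sqrt_le_sqrt (show (2 * ((n:ℝ)+2)^2)^2 ≤ A by rw [hAdef]; nlinarith)
        rwa [Real.sqrt_sq (by positivity)] at this
      have hsp : (0:ℝ) < Real.sqrt A := Real.sqrt_pos.mpr hApos
      rw [div_mul_eq_mul_div, div_le_div_iff₀ hApos (by positivity)]
      nlinarith [mul_le_mul_of_nonneg_left h1 (Real.sqrt_nonneg A), hsq, Real.sqrt_nonneg A]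
  -- the point e0
  set e0 : lp (fun _ : ℕ => ℝ) 2 := lp.single 2 0 (1:ℝ) with he0def
  have he0nz : e0 ≠ 0 := by
    intro h
    have h1 : (e0 : ∀ _ : ℕ, ℝ) 0 = 1 := lp.single_apply_self _ _ _
    rw [h] at h1
    simp at h1
  have hfe0 : f e0 = 1 := by
    rw [hf]
    rw [tsum_eq_single 0 ?_]
    · simp [he0def, lp.single_apply_self]
    · intro b hb
      simp [he0def, lp.single_apply_ne _ _ _ hb, Pi.single_apply, hb, zero_pow (by omega : 2 * (b+1) ≠ 0)]
  have hge0 : g e0 = (2:ℝ) • e0 := by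
    apply lp.ext
    funext k
    have h2 : ((2:ℝ) • e0 : lp (fun _ : ℕ => ℝ) 2) k = 2 * (e0 : ∀ _ : ℕ, ℝ) k := by simp
    show (g e0) k = _
    rw [h2, hg]
    rcases eq_or_ne k 0 with rfl | hk0
    · simp [he0def, lp.single_apply_self]
    · simp [he0def, lp.single_apply_ne _ _ _ hk0, Pi.single_apply, hk0,
        zero_pow (by omega : 2 * (k+1) - 1 ≠ 0)]
  have hne0 : ‖e0‖ = 1 := by
    have key : ⟪e0, e0⟫ = 1 := by
      rw [he0def, aux_inner_single]
      simp [lp.single_apply_self]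
    rw [real_inner_self_eq_norm_sq] at key
    nlinarith [norm_nonneg e0]
  have hTfix : T e0 ≠ e0 := by
    intro h
    rw [hT, if_neg he0nz, hfe0, hge0] at h
    have h2 : ‖(2:ℝ) • e0‖ = 2 := by
      rw [norm_smul, hne0]
      simp
    rw [h2] at h
    have h3 : (1 / (2:ℝ)^2) • ((2:ℝ) • e0) = 0 := by
      have := sub_eq_self.mp h
      simpa using this
    rw [smul_smul] at h3
    norm_num at h3
    exact he0nz h3
  -- weak convergence
  have hweak : ∀ v : lp (fun _ : ℕ => ℝ) 2,
      Tendsto (fun n => ⟪s n, v⟫) atTop (𝓝 ⟪e0, v⟫) := by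
    intro v
    have hsum : Summable (fun i => (v : ∀ _ : ℕ, ℝ) i * v i) := by
      simpa [RCLike.inner_apply, sq] using lp.summable_inner (𝕜 := ℝ) v v
    have h0 : Tendsto (fun i => (v : ∀ _ : ℕ, ℝ) i * v i) atTop (𝓝 0) :=
      hsum.tendsto_atTop_zero
    have hv : Tendsto (fun i => (v : ∀ _ : ℕ, ℝ) i) atTop (𝓝 0) := by
      rw [tendsto_zero_iff_abs_tendsto_zero]
      have h1 := (Real.continuous_sqrt.tendsto 0).comp h0
      simp only [Real.sqrt_zero] at h1
      have h2 : (abs ∘ fun i => (v : ∀ _ : ℕ, ℝ) i)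
          = (fun x => Real.sqrt x) ∘ (fun i => (v : ∀ _ : ℕ, ℝ) i * v i) := by
        funext i
        simp [Function.comp, Real.sqrt_mul_self_eq_abs]
      rw [h2]
      exact h1
    have heq : ∀ n : ℕ, ⟪s n, v⟫ = ⟪e0, v⟫ + (v : ∀ _ : ℕ, ℝ) (n+1) := by
      intro n
      rw [hs, inner_add_left]
      congr 1
      rw [aux_inner_single, one_mul]
    simp only [heq]
    have := Tendsto.add
      (tendsto_const_nhds : Tendsto (fun _ : ℕ => (⟪e0, v⟫ : ℝ)) atTop (𝓝 ⟪e0, v⟫))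
      (hv.comp (tendsto_add_atTop_nat 1))
    simpa using this
  refine ⟨hweak, hfs, hgn, hstrong, hTfix, ?_⟩
  intro H
  exact hTfix (H s e0 hweak hstrong)
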